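/- arXiv:1312.5085 — 5 statements merged into one kernel-verified Lean document; each statement's English description precedes it below -/
import Mathlib

section
/- Let g_j, g_k, g_h be vectors in (Z_4)^n each having at least one odd entry, such that no one of them is a Z_4-scalar multiple of another (in particular they are distinct). Define α(g) = 1 if g ≡ 0 (mod 4) and α(g) = 0 otherwise, and β_{jkh} = α(g_j+g_k+g_h) + α(g_j+g_k-g_h) + α(g_j-g_k+g_h) + α(g_j-g_k-g_h). Then β_{jkh} ∈ {0, 1}. -/
open Complex Finset

noncomputable def ipow (a : ZMod 4) : ℂ := Complex.I ^ a.val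

def isOddZ4 (a : ZMod 4) : Prop := a = 1 ∨ a = 3

instance : DecidablePred isOddZ4 := fun a => by unfold isOddZ4; infer_instance

/-- `g` has an odd entry and its first (lowest-index) odd entry equals 1. -/
def inOmega {n : ℕ} (g : Fin n → ZMod 4) : Prop :=
  ∃ i : Fin n, g i = 1 ∧ ∀ j : Fin n, j < i → ¬ isOddZ4 (g j)

instance {n : ℕ} : DecidablePred (inOmega (n := n)) := fun g => by
  unfold inOmega; infer_instance

def allEven {n : ℕ} (u : Fin n → ZMod 4) : Prop := ∀ i, u i = 0 ∨ u i = 2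

instance {n : ℕ} : DecidablePred (allEven (n := n)) := fun u => by
  unfold allEven; infer_instance

def dot4 {n : ℕ} (u w : Fin n → ZMod 4) : ZMod 4 := ∑ i, u i * w i

def alpha4 {n : ℕ} (g : Fin n → ZMod 4) : ℕ := if g = 0 then 1 else 0

def beta4 {n : ℕ} (a b c : Fin n → ZMod 4) : ℕ :=
  alpha4 (a + b + c) + alpha4 (a + b - c) + alpha4 (a - b + c) + alpha4 (a - b - c)

lemma allEven_of_double {n : ℕ} (u : Fin n → ZMod 4) (h : ∀ i, u i + u i = 0) :
    allEven u := by
  intro i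
  have h4 : ∀ x : ZMod 4, x + x = 0 → x = 0 ∨ x = 2 := by decide
  exact h4 _ (h i)

/-- Lemma A.1(a): β_{jkh} ∈ {0,1}. -/
theorem beta_le_one {n : ℕ} (gj gk gh : Fin n → ZMod 4)
    (hj : ¬ allEven gj) (hk : ¬ allEven gk) (hh : ¬ allEven gh)
    (h1 : ∀ c : ZMod 4, gj ≠ c • gk) (h2 : ∀ c : ZMod 4, gk ≠ c • gj)
    (h3 : ∀ c : ZMod 4, gj ≠ c • gh) (h4 : ∀ c : ZMod 4, gh ≠ c • gj)
    (h5 : ∀ c : ZMod 4, gk ≠ c • gh) (h6 : ∀ c : ZMod 4, gh ≠ c • gk) :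
    beta4 gj gk gh = 0 ∨ beta4 gj gk gh = 1 := by
  have key : ∀ (x y : Fin n → ZMod 4), x = 0 → y = 0 →
      ∀ i, (x i = 0 ∧ y i = 0) := by
    intro x y hx hy i
    exact ⟨congrFun hx i, congrFun hy i⟩
  -- pairwise contradictions
  have pj : ∀ (e1 : gj + gk + gh = 0) (e2 : gj - gk - gh = 0), False := by
    intro e1 e2
    refine hj (allEven_of_double _ fun i => ?_)
    have a1 := congrFun e1 i; have a2 := congrFun e2 i
    simp only [Pi.add_apply, Pi.sub_apply, Pi.zero_apply] at a1 a2
    linear_combination a1 + a2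
  have pj' : ∀ (e1 : gj + gk - gh = 0) (e2 : gj - gk + gh = 0), False := by
    intro e1 e2
    refine hj (allEven_of_double _ fun i => ?_)
    have a1 := congrFun e1 i; have a2 := congrFun e2 i
    simp only [Pi.add_apply, Pi.sub_apply, Pi.zero_apply] at a1 a2
    linear_combination a1 + a2
  have pk : ∀ (e1 : gj + gk + gh = 0) (e2 : gj - gk + gh = 0), False := by
    intro e1 e2
    refine hk (allEven_of_double _ fun i => ?_)
    have a1 := congrFun e1 i; have a2 := congrFun e2 i
    simp only [Pi.add_apply, Pi.sub_apply, Pi.zero_apply] at a1 a2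
    linear_combination a1 - a2
  have pk' : ∀ (e1 : gj + gk - gh = 0) (e2 : gj - gk - gh = 0), False := by
    intro e1 e2
    refine hk (allEven_of_double _ fun i => ?_)
    have a1 := congrFun e1 i; have a2 := congrFun e2 i
    simp only [Pi.add_apply, Pi.sub_apply, Pi.zero_apply] at a1 a2
    linear_combination a1 - a2
  have ph : ∀ (e1 : gj + gk + gh = 0) (e2 : gj + gk - gh = 0), False := by
    intro e1 e2
    refine hh (allEven_of_double _ fun i => ?_)
    have a1 := congrFun e1 i; have a2 := congrFun e2 i
    simp only [Pi.add_apply, Pi.sub_apply, Pi.zero_apply] at a1 a2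
    linear_combination a1 - a2
  have ph' : ∀ (e1 : gj - gk + gh = 0) (e2 : gj - gk - gh = 0), False := by
    intro e1 e2
    refine hh (allEven_of_double _ fun i => ?_)
    have a1 := congrFun e1 i; have a2 := congrFun e2 i
    simp only [Pi.add_apply, Pi.sub_apply, Pi.zero_apply] at a1 a2
    linear_combination a1 - a2
  unfold beta4 alpha4
  by_cases e1 : gj + gk + gh = 0 <;> by_cases e2 : gj + gk - gh = 0 <;>
    by_cases e3 : gj - gk + gh = 0 <;> by_cases e4 : gj - gk - gh = 0 <;>
    simp only [e1, e2, e3, e4, if_pos, if_neg, if_true, if_false] <;>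
    first
      | (exact absurd e2 (fun e2 => ph e1 e2))
      | (exact absurd e3 (fun e3 => pk e1 e3))
      | (exact absurd e4 (fun e4 => pj e1 e4))
      | (exact absurd e3 (fun e3 => pj' e2 e3))
      | (exact absurd e4 (fun e4 => pk' e2 e4))
      | (exact absurd e4 (fun e4 => ph' e3 e4))
      | simp
end

section
/- With notation as above, fix g_j and g_k each having an odd entry. If every entry of g_j + g_k (mod 4) is even, then β_{jkh} = 0 for all admissible g_h. Moreover, among any family {g_h} of vectors with odd first-odd-entry equal to 1 and no two being Z_4-multiples of each other, at most two members g_h satisfy β_{jkh} = 1. -/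
open Complex Finset

lemma alpha4_eq_zero {n : ℕ} {g : Fin n → ZMod 4} (h : g ≠ 0) : alpha4 g = 0 := by
  simp [alpha4, h]

lemma alpha4_ne_zero {n : ℕ} {g : Fin n → ZMod 4} (h : alpha4 g ≠ 0) : g = 0 := by
  by_contra hg; exact h (alpha4_eq_zero hg)

lemma neg_even {a : ZMod 4} (h : a = 0 ∨ a = 2) : -a = 0 ∨ -a = 2 := by
  rcases h with h | h <;> subst h <;> decide

lemma sub_even {a b : ZMod 4} (ha : a = 0 ∨ a = 2) (hb : b = 0 ∨ b = 2) :
    a - b = 0 ∨ a - b = 2 := by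
  rcases ha with h | h <;> rcases hb with h' | h' <;> subst h <;> subst h' <;> decide

lemma two_mul_even (a : ZMod 4) : 2 * a = 0 ∨ 2 * a = 2 := by
  fin_cases a <;> decide

lemma neg_eq_three_smul {n : ℕ} (g : Fin n → ZMod 4) : -g = (3 : ZMod 4) • g := by
  funext i
  show -g i = 3 * g i
  have : (3 : ZMod 4) = -1 := by decide
  rw [this]; ring

/-- key: beta4 = 1 forces h to be one of the four vectors -/
lemma beta4_cases {n : ℕ} (gj gk h : Fin n → ZMod 4) (hb : beta4 gj gk h = 1) :
    h = gj + gk ∨ h = -(gj + gk) ∨ h = gj - gk ∨ h = -(gj - gk) := by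
  by_contra hc
  push_neg at hc
  obtain ⟨h1, h2, h3, h4⟩ := hc
  have e1 : gj + gk + h ≠ 0 := fun he => h2 (by linear_combination (norm := abel) he)
  have e2 : gj + gk - h ≠ 0 := fun he => h1 (by linear_combination (norm := abel) -he)
  have e3 : gj - gk + h ≠ 0 := fun he => h4 (by linear_combination (norm := abel) he)
  have e4 : gj - gk - h ≠ 0 := fun he => h3 (by linear_combination (norm := abel) -he)
  rw [beta4, alpha4_eq_zero e1, alpha4_eq_zero e2, alpha4_eq_zero e3,
    alpha4_eq_zero e4] at hb
  exact absurd hb (by norm_num)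

/-- Lemma A.1(b): if g_j + g_k has all entries even then β_{jkh} = 0 for all admissible
g_h; moreover among any family of vectors with first odd entry 1, no two of which are
Z₄-multiples of each other, at most two members satisfy β_{jkh} = 1. -/
theorem beta_bound {n : ℕ} (gj gk : Fin n → ZMod 4)
    (hj : ¬ allEven gj) (hk : ¬ allEven gk) :
    (allEven (gj + gk) →
      ∀ gh : Fin n → ZMod 4, ¬ allEven gh → beta4 gj gk gh = 0) ∧
    (∀ T : Finset (Fin n → ZMod 4), (∀ g ∈ T, inOmega g) →
      (∀ g ∈ T, ∀ g' ∈ T, g ≠ g' → ∀ c : ZMod 4, g ≠ c • g') →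
      (T.filter (fun h => beta4 gj gk h = 1)).card ≤ 2) := by
  constructor
  · intro hev gh hgh
    have hdev : allEven (gj - gk) := by
      intro i
      have h1 : (gj + gk) i = 0 ∨ (gj + gk) i = 2 := hev i
      have h2 : gj i - gk i = (gj i + gk i) - 2 * gk i := by ring
      have := sub_even h1 (two_mul_even (gk i))
      simpa [Pi.sub_apply, h2] using this
    have key : ∀ u : Fin n → ZMod 4, allEven u → (u + gh ≠ 0 ∧ u - gh ≠ 0) := by
      intro u hu
      constructor
      · intro he
        apply hgh
        intro i
        have : gh i = -(u i) := by
          have := congrFun he i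
          simp [Pi.add_apply] at this
          linear_combination this
        rw [this]; exact neg_even (hu i)
      · intro he
        apply hgh
        intro i
        have : gh i = u i := by
          have := congrFun he i
          simp [Pi.sub_apply, sub_eq_zero] at this
          exact this.symm
        rw [this]; exact hu i
    obtain ⟨e1, e2⟩ := key _ hev
    obtain ⟨e3, e4⟩ := key _ hdev
    rw [beta4, alpha4_eq_zero e1, alpha4_eq_zero e2, alpha4_eq_zero e3,
      alpha4_eq_zero e4]
  · intro T hT hmult
    set s := gj + gk with hs
    set d := gj - gk with hd
    set F := T.filter (fun h => beta4 gj gk h = 1) with hF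
    have hsub : F ⊆ ({s, -s} : Finset _) ∪ ({d, -d} : Finset _) := by
      intro h hh
      rw [hF, mem_filter] at hh
      have := beta4_cases gj gk h hh.2
      simp only [mem_union, mem_insert, mem_singleton]
      tauto
    have pair : ∀ x : Fin n → ZMod 4, (F ∩ ({x, -x} : Finset _)).card ≤ 1 := by
      intro x
      rw [Finset.card_le_one]
      intro a ha b hb
      by_contra hne
      rw [mem_inter, hF, mem_filter] at ha hb
      have haT := ha.1.1
      have hbT := hb.1.1
      have ha2 : a = x ∨ a = -x := by
        have := ha.2; simp only [mem_insert, mem_singleton] at this; exact this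
      have hb2 : b = x ∨ b = -x := by
        have := hb.2; simp only [mem_insert, mem_singleton] at this; exact this
      have habs : a = (3 : ZMod 4) • b := by
        rcases ha2 with h1 | h1 <;> rcases hb2 with h2 | h2
        · exact absurd (h1.trans h2.symm) hne
        · rw [h1, h2, ← neg_eq_three_smul, neg_neg]
        · rw [h1, h2, ← neg_eq_three_smul]
        · exact absurd (h1.trans h2.symm) hne
      exact hmult a haT b hbT hne 3 habs
    calc F.card = (F ∩ (({s, -s} : Finset _) ∪ ({d, -d} : Finset _))).card := by
          rw [inter_eq_left.mpr hsub]
      _ = ((F ∩ ({s, -s} : Finset _)) ∪ (F ∩ ({d, -d} : Finset _))).card := by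
          rw [inter_union_distrib_left]
      _ ≤ (F ∩ ({s, -s} : Finset _)).card + (F ∩ ({d, -d} : Finset _)).card :=
          card_union_le _ _
      _ ≤ 1 + 1 := Nat.add_le_add (pair s) (pair d)
      _ = 2 := rfl
end

section
/- Let n ≥ 2 and m ≥ 1. There exists a set S̄ of m vectors in (Z_4)^n, each having first odd entry equal to 1, no two of which are Z_4-multiples of each other, such that g + g' has all entries even for every g, g' ∈ S̄, if and only if m ≤ 2^{n-1}. -/
open Complex Finset

/-- high bit of an element of ZMod 4 -/
def hb4 (a : ZMod 4) : Bool := a = 2 ∨ a = 3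

lemma key_eq : ∀ a b : ZMod 4, (a + b = 0 ∨ a + b = 2) → hb4 a = hb4 b → a = b := by
  decide

lemma key_parity : ∀ a b c : ZMod 4, (a + c = 0 ∨ a + c = 2) → (b + c = 0 ∨ b + c = 2) →
    (a + b = 0 ∨ a + b = 2) := by decide

lemma key_odd : ∀ a b : ZMod 4, (a + b = 0 ∨ a + b = 2) → isOddZ4 a → isOddZ4 b := by
  decide

lemma key_even_add : ∀ a b : ZMod 4, (a = 0 ∨ a = 2) → (b = 0 ∨ b = 2) →
    (a + b = 0 ∨ a + b = 2) := by decide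

/-- Lemma 2: an even set S̄ of m vectors (first odd entry 1, pairwise non-multiples)
exists if and only if m ≤ 2^{n-1}. -/
theorem even_set_exists_iff {n : ℕ} (hn : 2 ≤ n) (m : ℕ) (hm : 1 ≤ m) :
    (∃ Sb : Finset (Fin n → ZMod 4), Sb.card = m ∧ (∀ g ∈ Sb, inOmega g) ∧
      (∀ g ∈ Sb, ∀ g' ∈ Sb, g ≠ g' → ∀ c : ZMod 4, g ≠ c • g') ∧
      (∀ g ∈ Sb, ∀ g' ∈ Sb, allEven (g + g'))) ↔ m ≤ 2 ^ (n - 1) := by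
  constructor
  · rintro ⟨Sb, hcard, hΩ, -, heven⟩
    have hne : Sb.Nonempty := by
      rw [← Finset.card_pos, hcard]; omega
    obtain ⟨g0, hg0⟩ := hne
    obtain ⟨i0, h01, h0min⟩ := hΩ g0 hg0
    -- every g in Sb has g i0 = 1
    have hA : ∀ g ∈ Sb, g i0 = 1 := by
      intro g hg
      obtain ⟨i, hi1, himin⟩ := hΩ g hg
      have he := heven g hg g0 hg0
      rcases lt_trichotomy i i0 with h | h | h
      · exact absurd (key_odd (g i) (g0 i) (he i) (Or.inl hi1)) (h0min i h)
      · rw [← h]; exact hi1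
      · have : isOddZ4 (g i0) :=
          key_odd (g0 i0) (g i0) (by rw [add_comm]; exact he i0) (Or.inl h01)
        exact absurd this (himin i0 h)
    -- injection into functions {j // j ≠ i0} → Bool
    set ψ : (Fin n → ZMod 4) → ({j : Fin n // j ≠ i0} → Bool) :=
      fun g j => hb4 (g j.1) with hψ
    have hinj : Set.InjOn ψ Sb := by
      intro g hg g' hg' heq
      funext i
      by_cases hi : i = i0
      · rw [hi, hA g hg, hA g' hg']
      · have h1 := heven g hg g0 hg0 i
        have h2 := heven g' hg' g0 hg0 i
        have hpar := key_parity (g i) (g' i) (g0 i) h1 h2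
        have hbeq : hb4 (g i) = hb4 (g' i) := congrFun heq ⟨i, hi⟩
        exact key_eq _ _ hpar hbeq
    have hle : Sb.card ≤ (Finset.univ : Finset ({j : Fin n // j ≠ i0} → Bool)).card :=
      Finset.card_le_card_of_injOn ψ (fun _ _ => Finset.mem_univ _) hinj
    rw [hcard, Finset.card_univ] at hle
    calc m ≤ Fintype.card ({j : Fin n // j ≠ i0} → Bool) := hle
      _ = 2 ^ Fintype.card {j : Fin n // j ≠ i0} := by
          rw [Fintype.card_fun, Fintype.card_bool]
      _ = 2 ^ (n - 1) := by
          congr 1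
          have : Fintype.card {j : Fin n // ¬ (j = i0)} =
              Fintype.card (Fin n) - Fintype.card {j : Fin n // j = i0} :=
            Fintype.card_subtype_compl _
          simpa [Fintype.card_subtype_eq] using this
  · intro hmle
    have hn0 : 0 < n := by omega
    set i0 : Fin n := ⟨0, hn0⟩ with hi0
    set F : ({j : Fin n // j ≠ i0} → Bool) → (Fin n → ZMod 4) :=
      fun b i => if h : i = i0 then 1 else (if b ⟨i, h⟩ then 2 else 0) with hF
    have hFi0 : ∀ b, F b i0 = 1 := fun b => by simp [hF]
    have hFother : ∀ b i, (h : i ≠ i0) → F b i = if b ⟨i, h⟩ then 2 else 0 :=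
      fun b i h => by simp [hF, h]
    have hFinj : Function.Injective F := by
      intro b b' h
      funext j
      have := congrFun h j.1
      rw [hFother b j.1 j.2, hFother b' j.1 j.2] at this
      cases hj : b j <;> cases hj' : b' j <;> rw [hj, hj'] at this <;>
        simp_all <;> exact absurd this (by decide)
    have hcardU : (Finset.univ : Finset ({j : Fin n // j ≠ i0} → Bool)).card = 2 ^ (n - 1) := by
      rw [Finset.card_univ, Fintype.card_fun, Fintype.card_bool]
      congr 1
      have : Fintype.card {j : Fin n // ¬ (j = i0)} =
          Fintype.card (Fin n) - Fintype.card {j : Fin n // j = i0} :=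
        Fintype.card_subtype_compl _
      simpa [Fintype.card_subtype_eq] using this
    obtain ⟨B, -, hB⟩ := Finset.exists_subset_card_eq
      (s := (Finset.univ : Finset ({j : Fin n // j ≠ i0} → Bool))) (n := m) (by rw [hcardU]; exact hmle)
    refine ⟨B.image F, ?_, ?_, ?_, ?_⟩
    · rw [Finset.card_image_of_injective _ hFinj, hB]
    · intro g hg
      obtain ⟨b, -, rfl⟩ := Finset.mem_image.mp hg
      refine ⟨i0, hFi0 b, fun j hj => ?_⟩
      exact absurd hj (by simp [hi0, Fin.lt_def])
    · intro g hg g' hg' hne c hc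
      obtain ⟨b, -, rfl⟩ := Finset.mem_image.mp hg
      obtain ⟨b', -, rfl⟩ := Finset.mem_image.mp hg'
      have := congrFun hc i0
      rw [hFi0] at this
      simp only [Pi.smul_apply, smul_eq_mul, hFi0, mul_one] at this
      rw [hc, ← this, one_smul] at hne
      exact hne rfl
    · intro g hg g' hg' i
      obtain ⟨b, -, rfl⟩ := Finset.mem_image.mp hg
      obtain ⟨b', -, rfl⟩ := Finset.mem_image.mp hg'
      by_cases hi : i = i0
      · subst hi
        simp only [Pi.add_apply, hFi0]
        right; decide
      · have h1 : F b i = 0 ∨ F b i = 2 := by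
          rw [hFother b i hi]; cases b ⟨i, hi⟩ <;> simp
        have h2 : F b' i = 0 ∨ F b' i = 2 := by
          rw [hFother b' i hi]; cases b' ⟨i, hi⟩ <;> simp
        exact key_even_add _ _ h1 h2
end

section
/- Suppose S̄ = {g_{s+1}, ..., g_v} is an even subset of Ω (i.e., g_j + g_k has all entries even for all j, k), with |S̄| = v - s. Then Σ_{u ∈ Δ_0} σ̄_u² = 2^{n+2} (v-s)² and Σ_{u ∈ (Z_4)^n} σ̄_u³ = 0, where σ̄_u = Σ_{j=s+1}^{v} (i^{u·g_j} + i^{-u·g_j}) and Δ_0 is the set of vectors in (Z_4)^n with all entries even. -/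
open Complex Finset

lemma ipow_add (a b : ZMod 4) : ipow (a + b) = ipow a * ipow b := by
  have h4 : (Complex.I) ^ (4:ℕ) = 1 := Complex.I_pow_four
  unfold ipow
  rw [ZMod.val_add, ← pow_eq_pow_mod _ h4, pow_add]

lemma ipow_zero : ipow 0 = 1 := by simp [ipow]

lemma dot4_add {n : ℕ} (u g g' : Fin n → ZMod 4) :
    dot4 u (g + g') = dot4 u g + dot4 u g' := by
  simp [dot4, mul_add, Finset.sum_add_distrib]

lemma dot4_neg {n : ℕ} (u g : Fin n → ZMod 4) : dot4 u (-g) = -dot4 u g := by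
  simp [dot4, mul_neg]

lemma ev_dot {n : ℕ} {u : Fin n → ZMod 4} (hu : allEven u) (g : Fin n → ZMod 4) :
    dot4 u g = 0 ∨ dot4 u g = 2 := by
  unfold dot4
  apply Finset.sum_induction _ (fun x => x = 0 ∨ x = 2)
  · exact fun a b => (by decide : ∀ a b : ZMod 4, (a=0∨a=2)→(b=0∨b=2)→(a+b=0∨a+b=2)) a b
  · exact Or.inl rfl
  · intro i _
    rcases hu i with h | h <;> rw [h]
    · exact Or.inl (zero_mul _)
    · exact (by decide : ∀ x : ZMod 4, 2*x = 0 ∨ 2*x = 2) _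

lemma dot4_even_even {n : ℕ} {u w : Fin n → ZMod 4} (hu : allEven u) (hw : allEven w) :
    dot4 u w = 0 := by
  apply Finset.sum_eq_zero
  intro i _
  exact (by decide : ∀ a b : ZMod 4, (a=0∨a=2)→(b=0∨b=2)→a*b=0) _ _ (hu i) (hw i)

lemma sum_ipow_eq_zero {n : ℕ} {w : Fin n → ZMod 4} {i0 : Fin n}
    (h : w i0 = 1 ∨ w i0 = 3) :
    ∑ u : Fin n → ZMod 4, ipow (dot4 u w) = 0 := by
  set S := ∑ u : Fin n → ZMod 4, ipow (dot4 u w) with hS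
  set δ : Fin n → ZMod 4 := fun j => if j = i0 then 1 else 0 with hδ
  have hshift : ∀ u : Fin n → ZMod 4, dot4 (u + δ) w = dot4 u w + w i0 := by
    intro u
    have hone : ∑ j, δ j * w j = w i0 := by
      rw [hδ]
      simp [ite_mul]
    simp [dot4, add_mul, Finset.sum_add_distrib, hone]
  have heq : S = S * ipow (w i0) := by
    calc S = ∑ u : Fin n → ZMod 4, ipow (dot4 (u + δ) w) :=
          (Fintype.sum_equiv (Equiv.addRight δ) _ _ (fun u => rfl)).symm
      _ = ∑ u : Fin n → ZMod 4, ipow (dot4 u w) * ipow (w i0) := by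
          simp only [hshift, ipow_add]
      _ = S * ipow (w i0) := by rw [← Finset.sum_mul]
  have hne : ipow (w i0) ≠ 1 := by
    rcases h with h | h <;> rw [h] <;> unfold ipow
    · rw [show ((1:ZMod 4)).val = 1 from rfl]
      intro hc
      have := congrArg Complex.im hc
      simp at this
    · rw [show ((3:ZMod 4)).val = 3 from rfl]
      intro hc
      have := congrArg Complex.im hc
      simp [pow_succ, Complex.I_mul_I] at this
  have hz : S * (1 - ipow (w i0)) = 0 := by
    rw [mul_sub, mul_one, ← heq, sub_self]
  rcases mul_eq_zero.mp hz with h0 | h0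
  · exact h0
  · exact absurd ((sub_eq_zero.mp h0).symm) hne

lemma cube_term_zero {n : ℕ} (g1 g2 g3 : Fin n → ZMod 4)
    (h12 : allEven (g1 + g2)) (h3 : inOmega g3) :
    ∑ u : Fin n → ZMod 4,
      (ipow (dot4 u g1) + ipow (-(dot4 u g1))) *
      (ipow (dot4 u g2) + ipow (-(dot4 u g2))) *
      (ipow (dot4 u g3) + ipow (-(dot4 u g3))) = 0 := by
  obtain ⟨i0, h1, -⟩ := h3
  have hev : g1 i0 + g2 i0 = 0 ∨ g1 i0 + g2 i0 = 2 := h12 i0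
  have hterm : ∀ u : Fin n → ZMod 4,
      (ipow (dot4 u g1) + ipow (-(dot4 u g1))) *
      (ipow (dot4 u g2) + ipow (-(dot4 u g2))) *
      (ipow (dot4 u g3) + ipow (-(dot4 u g3)))
      = ipow (dot4 u (g1+g2+g3)) + ipow (dot4 u (g1+g2+(-g3)))
      + ipow (dot4 u (g1+(-g2)+g3)) + ipow (dot4 u (g1+(-g2)+(-g3)))
      + ipow (dot4 u ((-g1)+g2+g3)) + ipow (dot4 u ((-g1)+g2+(-g3)))
      + ipow (dot4 u ((-g1)+(-g2)+g3)) + ipow (dot4 u ((-g1)+(-g2)+(-g3))) := by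
    intro u
    simp only [dot4_add, dot4_neg, ipow_add]
    ring
  have key : ∀ w : Fin n → ZMod 4, (w i0 = 1 ∨ w i0 = 3) →
      ∑ u : Fin n → ZMod 4, ipow (dot4 u w) = 0 := fun w hw => sum_ipow_eq_zero hw
  simp only [hterm, Finset.sum_add_distrib]
  rw [key (g1+g2+g3) ?_, key (g1+g2+(-g3)) ?_, key (g1+(-g2)+g3) ?_,
      key (g1+(-g2)+(-g3)) ?_, key ((-g1)+g2+g3) ?_, key ((-g1)+g2+(-g3)) ?_,
      key ((-g1)+(-g2)+g3) ?_, key ((-g1)+(-g2)+(-g3)) ?_]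
  · norm_num
  all_goals
    (revert hev
     simp only [Pi.add_apply, Pi.neg_apply, h1]
     generalize g1 i0 = a
     generalize g2 i0 = b
     revert a b
     decide)

/-- For an even subset S̄ of Ω, Σ_{u ∈ Δ₀} σ̄_u² = 2^{n+2}(v-s)² and Σ_u σ̄_u³ = 0. -/
theorem even_set_sums {n : ℕ} (Sb : Finset (Fin n → ZMod 4))
    (hΩ : ∀ g ∈ Sb, inOmega g)
    (heven : ∀ g ∈ Sb, ∀ g' ∈ Sb, allEven (g + g')) :
    (∑ u ∈ Finset.univ.filter (allEven (n := n)),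
        (∑ g ∈ Sb, (ipow (dot4 u g) + ipow (-(dot4 u g)))) ^ 2
      = 2 ^ (n + 2) * (Sb.card : ℂ) ^ 2) ∧
    (∑ u : Fin n → ZMod 4,
        (∑ g ∈ Sb, (ipow (dot4 u g) + ipow (-(dot4 u g)))) ^ 3 = 0) := by
  constructor
  · have hcard : (Finset.univ.filter (allEven (n := n))).card = 2 ^ n := by
      have hset : Finset.univ.filter (allEven (n := n))
          = Fintype.piFinset (fun _ : Fin n => ({0, 2} : Finset (ZMod 4))) := by
        ext u
        simp [allEven, Fintype.mem_piFinset]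
      rw [hset, Fintype.card_piFinset]
      rw [show ({0, 2} : Finset (ZMod 4)).card = 2 from by decide]
      simp
    have hsq : ∀ u ∈ Finset.univ.filter (allEven (n := n)),
        (∑ g ∈ Sb, (ipow (dot4 u g) + ipow (-(dot4 u g)))) ^ 2
        = 4 * (Sb.card : ℂ) ^ 2 := by
      intro u hu
      have hae : allEven u := (Finset.mem_filter.mp hu).2
      have h2 : ∀ g : Fin n → ZMod 4, ipow (-(dot4 u g)) = ipow (dot4 u g) := by
        intro g
        rcases ev_dot hae g with h | h <;> rw [h]
        · rw [neg_zero]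
        · rw [show -(2 : ZMod 4) = 2 from by decide]
      have h1 : ∀ g ∈ Sb, ∀ g' ∈ Sb, ipow (dot4 u g) * ipow (dot4 u g') = 1 := by
        intro g hg g' hg'
        rw [← ipow_add, ← dot4_add, dot4_even_even hae (heven g hg g' hg'), ipow_zero]
      calc (∑ g ∈ Sb, (ipow (dot4 u g) + ipow (-(dot4 u g)))) ^ 2
          = (2 * ∑ g ∈ Sb, ipow (dot4 u g)) ^ 2 := by
            rw [Finset.mul_sum]
            congr 1
            exact Finset.sum_congr rfl fun g _ => by rw [h2 g]; ring
        _ = 4 * ((∑ g ∈ Sb, ipow (dot4 u g)) * (∑ g ∈ Sb, ipow (dot4 u g))) := by ring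
        _ = 4 * ∑ g ∈ Sb, ∑ g' ∈ Sb, ipow (dot4 u g) * ipow (dot4 u g') := by
            rw [Finset.sum_mul_sum]
        _ = 4 * ∑ g ∈ Sb, ∑ g' ∈ Sb, (1 : ℂ) := by
            congr 1
            exact Finset.sum_congr rfl fun g hg =>
              Finset.sum_congr rfl fun g' hg' => h1 g hg g' hg'
        _ = 4 * (Sb.card : ℂ) ^ 2 := by
            simp [Finset.sum_const]
            ring
    rw [Finset.sum_congr rfl hsq, Finset.sum_const, hcard, nsmul_eq_mul]
    push_cast
    ring
  · have hexp : ∀ u : Fin n → ZMod 4,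
        (∑ g ∈ Sb, (ipow (dot4 u g) + ipow (-(dot4 u g)))) ^ 3
        = ∑ g1 ∈ Sb, ∑ g2 ∈ Sb, ∑ g3 ∈ Sb,
            (ipow (dot4 u g1) + ipow (-(dot4 u g1))) *
            (ipow (dot4 u g2) + ipow (-(dot4 u g2))) *
            (ipow (dot4 u g3) + ipow (-(dot4 u g3))) := by
      intro u
      rw [pow_succ, sq, Finset.sum_mul_sum]
      rw [Finset.sum_mul]
      refine Finset.sum_congr rfl fun g1 _ => ?_
      rw [Finset.sum_mul]
      refine Finset.sum_congr rfl fun g2 _ => ?_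
      rw [Finset.mul_sum]
    simp only [hexp]
    rw [Finset.sum_comm]
    refine Finset.sum_eq_zero fun g1 hg1 => ?_
    rw [Finset.sum_comm]
    refine Finset.sum_eq_zero fun g2 hg2 => ?_
    rw [Finset.sum_comm]
    refine Finset.sum_eq_zero fun g3 hg3 => ?_
    exact cube_term_zero g1 g2 g3 (heven g1 hg1 g2 hg2) (hΩ g3 hg3)
end

section
/- Let d be a regular two-level fractional factorial design with wordlength pattern A_k(d) generated by a binary matrix B with m columns (m factors, N runs), and let d_0 be the design generated by the matrix [B B] (each column duplicated). Then for every h ≥ 1, A_h(d_0) = Σ_k C(m − k, (h − k)/2) · 2^k · A_k(d), where the sum is over k ∈ {h, h−2, h−4, ...} with k ≥ 0, A_0(d) = 1, and the binomial coefficient is 0 when (h−k)/2 > m − k. -/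
open Finset

/-- The wordlength pattern of a regular two-level design generated by columns `b`:
`wlReg b k` counts the subsets of `k` columns summing to zero over GF(2). -/
def wlReg {ι : Type} [Fintype ι] [DecidableEq ι] {p : ℕ}
    (b : ι → (Fin p → ZMod 2)) (k : ℕ) : ℕ :=
  (Finset.univ.filter (fun T : Finset ι => T.card = k ∧ ∑ j ∈ T, b j = 0)).card

variable {α : Type} [DecidableEq α]

lemma aux_card (s t : Finset α) :
    s.card + t.card = (symmDiff s t).card + 2 * (s ∩ t).card := by
  have hd : Disjoint (s \ t) (t \ s) := disjoint_sdiff_sdiff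
  have h1 : (symmDiff s t).card = (s \ t).card + (t \ s).card := by
    rw [symmDiff_def, sup_eq_union, card_union_of_disjoint hd]
  have h2 := card_sdiff_add_card_inter s t
  have h3 := card_sdiff_add_card_inter t s
  rw [inter_comm] at h3
  omega

lemma aux_sum {M : Type*} [AddCommGroup M] (hM : ∀ x : M, x + x = 0)
    (f : α → M) (s t : Finset α) :
    (∑ j ∈ s, f j) + ∑ j ∈ t, f j = ∑ j ∈ symmDiff s t, f j := by
  have hd : Disjoint (s \ t) (t \ s) := disjoint_sdiff_sdiff
  have h1 : ∑ j ∈ symmDiff s t, f j = (∑ j ∈ s \ t, f j) + ∑ j ∈ t \ s, f j := by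
    rw [symmDiff_def, sup_eq_union, sum_union hd]
  have h2 : (∑ j ∈ s \ t, f j) + ∑ j ∈ s ∩ t, f j = ∑ j ∈ s, f j := by
    rw [← sdiff_inter_self_left s t]
    exact sum_sdiff inter_subset_left
  have h3 : (∑ j ∈ t \ s, f j) + ∑ j ∈ s ∩ t, f j = ∑ j ∈ t, f j := by
    rw [← sdiff_inter_self_left t s, inter_comm t s]
    exact sum_sdiff inter_subset_right
  have : (∑ j ∈ s, f j) + ∑ j ∈ t, f j
      = ((∑ j ∈ s \ t, f j) + ∑ j ∈ t \ s, f j)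
        + ((∑ j ∈ s ∩ t, f j) + (∑ j ∈ s ∩ t, f j)) := by
    rw [← h2, ← h3]; abel
  rw [this, hM, add_zero, h1]

lemma fiber_card {p m : ℕ} (b : Fin m → (Fin p → ZMod 2)) (h : ℕ) (T : Finset (Fin m)) :
    ((univ ×ˢ univ).filter fun q : Finset (Fin m) × Finset (Fin m) =>
        (q.1.card + q.2.card = h ∧ (∑ j ∈ q.1, b j) + ∑ j ∈ q.2, b j = 0)
          ∧ symmDiff q.1 q.2 = T).card
      = if (∑ j ∈ T, b j) = 0 ∧ T.card ≤ h ∧ (h - T.card) % 2 = 0 then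
          (m - T.card).choose ((h - T.card) / 2) * 2 ^ T.card
        else 0 := by
  have h2 : ∀ v : Fin p → ZMod 2, v + v = 0 := by
    intro v; funext i; exact CharTwo.add_self_eq_zero _
  split_ifs with hcond
  · obtain ⟨hs0, hle, hpar⟩ := hcond
    have hcard : ((Tᶜ.powersetCard ((h - T.card) / 2)) ×ˢ T.powerset).card
        = (m - T.card).choose ((h - T.card) / 2) * 2 ^ T.card := by
      rw [card_product, card_powersetCard, card_powerset, card_compl, Fintype.card_fin]
    rw [← hcard]
    apply card_nbij' (fun q => (q.1 ∩ q.2, q.1 \ q.2))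
      (fun r => (r.2 ∪ r.1, (T \ r.2) ∪ r.1))
    · -- hi
      intro q hq
      simp only [mem_coe, mem_filter, mem_product, mem_powersetCard, mem_powerset] at hq ⊢
      obtain ⟨-, ⟨hc, -⟩, hT⟩ := hq
      subst hT
      refine ⟨⟨?_, ?_⟩, ?_⟩
      · intro x hx
        simp only [mem_inter] at hx
        simp only [mem_compl, mem_symmDiff]
        tauto
      · have := aux_card q.1 q.2; omega
      · intro x hx
        simp only [mem_sdiff] at hx
        simp only [mem_symmDiff]
        tauto
    · -- hj
      intro r hr
      simp only [mem_coe, mem_product, mem_powersetCard, mem_powerset] at hr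
      obtain ⟨⟨hP, hPc⟩, hC⟩ := hr
      have hDP : ∀ x ∈ r.1, x ∉ T := fun x hx => by
        simpa using mem_compl.mp (hP hx)
      have hd1 : Disjoint r.2 r.1 :=
        disjoint_left.mpr fun x hxC hxP => hDP x hxP (hC hxC)
      have hd2 : Disjoint (T \ r.2) r.1 :=
        disjoint_left.mpr fun x hxT hxP => hDP x hxP (mem_sdiff.mp hxT).1
      have hCle := card_le_card hC
      simp only [mem_coe, mem_filter, mem_product]
      refine ⟨⟨mem_univ _, mem_univ _⟩, ⟨?_, ?_⟩, ?_⟩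
      · rw [card_union_of_disjoint hd1, card_union_of_disjoint hd2, card_sdiff_of_subset hC]
        omega
      · rw [sum_union hd1, sum_union hd2]
        have e : (∑ j ∈ T \ r.2, b j) + ∑ j ∈ r.2, b j = ∑ j ∈ T, b j :=
          sum_sdiff hC
        have rearr : ((∑ j ∈ r.2, b j) + ∑ j ∈ r.1, b j)
            + ((∑ j ∈ T \ r.2, b j) + ∑ j ∈ r.1, b j)
            = ((∑ j ∈ T \ r.2, b j) + ∑ j ∈ r.2, b j)
              + ((∑ j ∈ r.1, b j) + ∑ j ∈ r.1, b j) := by abel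
        rw [rearr, e, hs0, h2, add_zero]
      · ext x
        simp only [mem_symmDiff, mem_union, mem_sdiff]
        have hx1 := hDP x
        have hx2 : x ∈ r.2 → x ∈ T := fun hx => hC hx
        tauto
    · -- left_inv
      intro q hq
      simp only [mem_coe, mem_filter, mem_product] at hq
      obtain ⟨-, -, hT⟩ := hq
      subst hT
      have e1 : (q.1 \ q.2) ∪ (q.1 ∩ q.2) = q.1 := sdiff_union_inter q.1 q.2
      have e2 : (symmDiff q.1 q.2 \ (q.1 \ q.2)) ∪ (q.1 ∩ q.2) = q.2 := by
        ext x
        simp only [mem_union, mem_sdiff, mem_symmDiff, mem_inter]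
        tauto
      exact Prod.ext e1 e2
    · -- right_inv
      intro r hr
      simp only [mem_coe, mem_product, mem_powersetCard, mem_powerset] at hr
      obtain ⟨⟨hP, -⟩, hC⟩ := hr
      have hDP : ∀ x ∈ r.1, x ∉ T := fun x hx => by
        simpa using mem_compl.mp (hP hx)
      have e1 : (r.2 ∪ r.1) ∩ ((T \ r.2) ∪ r.1) = r.1 := by
        ext x
        simp only [mem_inter, mem_union, mem_sdiff]
        have hx1 := hDP x
        have hx2 : x ∈ r.2 → x ∈ T := fun hx => hC hx
        tauto
      have e2 : (r.2 ∪ r.1) \ ((T \ r.2) ∪ r.1) = r.2 := by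
        ext x
        simp only [mem_sdiff, mem_union]
        have hx1 := hDP x
        have hx2 : x ∈ r.2 → x ∈ T := fun hx => hC hx
        tauto
      exact Prod.ext e1 e2
  · rw [card_eq_zero, filter_eq_empty_iff]
    rintro q - ⟨⟨hc, hs⟩, hT⟩
    apply hcond
    subst hT
    have hac := aux_card q.1 q.2
    refine ⟨?_, by omega, by omega⟩
    rw [← aux_sum h2 b q.1 q.2]
    exact hs



/-- Equation (A.19): A_h([B B]) = Σ_k C(m-k, (h-k)/2) 2^k A_k(B), the sum over
k = h, h-2, h-4, … (k ≥ 0). -/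
theorem wlp_doubled_columns {p m : ℕ} (b : Fin m → (Fin p → ZMod 2)) (h : ℕ)
    (hh : 1 ≤ h) :
    wlReg (Sum.elim b b : Fin m ⊕ Fin m → (Fin p → ZMod 2)) h
      = ∑ k ∈ Finset.range (h + 1),
          if (h - k) % 2 = 0 then
            Nat.choose (m - k) ((h - k) / 2) * 2 ^ k * wlReg b k
          else 0 := by
  have h2 : ∀ v : Fin p → ZMod 2, v + v = 0 := by
    intro v; funext i; exact CharTwo.add_self_eq_zero _
  -- Step A: pass to pairs of subsets of `Fin m`
  have stepA : wlReg (Sum.elim b b : Fin m ⊕ Fin m → (Fin p → ZMod 2)) h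
      = ((univ ×ˢ univ).filter fun q : Finset (Fin m) × Finset (Fin m) =>
          q.1.card + q.2.card = h ∧ (∑ j ∈ q.1, b j) + ∑ j ∈ q.2, b j = 0).card := by
    rw [wlReg]
    apply card_nbij' (fun S => (S.toLeft, S.toRight)) (fun q => q.1.disjSum q.2)
    · intro S hS
      simp only [mem_coe, mem_filter, mem_univ, true_and] at hS
      obtain ⟨hc, hs⟩ := hS
      simp only [mem_coe, mem_filter, mem_product, mem_univ, true_and]
      refine ⟨?_, ?_⟩
      · rw [card_toLeft_add_card_toRight]; exact hc
      · rw [← sum_sumElim, toLeft_disjSum_toRight]; exact hs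
    · intro q hq
      simp only [mem_coe, mem_filter, mem_product, mem_univ, true_and] at hq
      obtain ⟨hc, hs⟩ := hq
      simp only [mem_coe, mem_filter, mem_univ, true_and]
      refine ⟨by rw [card_disjSum]; exact hc, by rw [sum_sumElim]; exact hs⟩
    · intro S _; exact toLeft_disjSum_toRight
    · intro q _; exact Prod.ext (toLeft_disjSum) (toRight_disjSum)
  rw [stepA]
  -- Step B: fiber over the symmetric difference
  rw [card_eq_sum_card_fiberwise
    (f := fun q : Finset (Fin m) × Finset (Fin m) => symmDiff q.1 q.2)
    (t := univ) (fun _ _ => mem_univ _)]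
  simp_rw [filter_filter, fiber_card b h]
  -- Step D: regroup by cardinality
  rw [← sum_filter]
  rw [← sum_fiberwise_of_maps_to (g := Finset.card) (t := Finset.range (h + 1))
    (fun T hT => by
      simp only [mem_filter] at hT
      exact mem_range.mpr (Nat.lt_succ_of_le hT.2.2.1))]
  refine sum_congr rfl fun k hk => ?_
  have hkh : k ≤ h := Nat.lt_succ_iff.mp (mem_range.mp hk)
  rw [filter_filter]
  split_ifs with hpar
  · have hset : (univ.filter fun T : Finset (Fin m) =>
        ((∑ j ∈ T, b j) = 0 ∧ T.card ≤ h ∧ (h - T.card) % 2 = 0) ∧ T.card = k)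
        = univ.filter fun T : Finset (Fin m) => T.card = k ∧ ∑ j ∈ T, b j = 0 := by
      ext T
      simp only [mem_filter, mem_univ, true_and]
      constructor
      · rintro ⟨⟨ha, -, -⟩, hd⟩; exact ⟨hd, ha⟩
      · rintro ⟨hd, ha⟩
        exact ⟨⟨ha, by omega, by rw [hd]; exact hpar⟩, hd⟩
    rw [hset]
    rw [sum_congr rfl (fun T hT => by
      rw [(mem_filter.mp hT).2.1] :
      ∀ T ∈ univ.filter fun T : Finset (Fin m) => T.card = k ∧ ∑ j ∈ T, b j = 0,
        (m - T.card).choose ((h - T.card) / 2) * 2 ^ T.card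
          = (m - k).choose ((h - k) / 2) * 2 ^ k)]
    rw [sum_const, smul_eq_mul, wlReg, mul_comm]
  · have hempty : (univ.filter fun T : Finset (Fin m) =>
        ((∑ j ∈ T, b j) = 0 ∧ T.card ≤ h ∧ (h - T.card) % 2 = 0) ∧ T.card = k) = ∅ := by
      rw [filter_eq_empty_iff]
      rintro T - ⟨⟨-, -, hm⟩, hd⟩
      rw [hd] at hm
      exact hpar hm
    rw [hempty, sum_empty]
end
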